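/- Let H be a real Hilbert space, T_A nonexpansive, B (1/L)-cocoercive and μ-strongly monotone, γ ∈ (0, 2/L), T = T_A ∘ (I - γB), and S = I - T. If x_* is a fixed point of T, then S is quasi-ν-strongly monotone at x_*: ⟨x - x_*, Sx⟩ ≥ ν‖x - x_*‖² for all x ∈ H, where ν = 1 - √(1 - 2γμ + μγ²L). -/

import Mathlib

set_option maxHeartbeats 1000000


theorem stmt_6 {H : Type*} [NormedAddCommGroup H] [InnerProductSpace ℝ H] [CompleteSpace H]
    (TA B : H → H) (L μ γ : ℝ) (hL : 0 < L) (hμ : 0 < μ)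
    (hTA : ∀ x y, ‖TA x - TA y‖ ≤ ‖x - y‖)
    (hB : ∀ x y, (inner ℝ (x - y) (B x - B y) : ℝ) ≥ (1 / L) * ‖B x - B y‖ ^ 2)
    (hBmono : ∀ x y, (inner ℝ (x - y) (B x - B y) : ℝ) ≥ μ * ‖x - y‖ ^ 2)
    (hγ : 0 < γ) (hγ2 : γ < 2 / L)
    (xstar : H) (hfix : TA (xstar - γ • B xstar) = xstar) :
    ∀ x, (inner ℝ (x - xstar) (x - TA (x - γ • B x)) : ℝ) ≥
      (1 - Real.sqrt (1 - 2 * γ * μ + μ * γ ^ 2 * L)) * ‖x - xstar‖ ^ 2 := by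
  intro x
  by_cases hx : x = xstar
  · simp [hx]
  set d : H := x - xstar with hd
  set b : H := B x - B xstar with hb
  set c : ℝ := 1 - 2 * γ * μ + μ * γ ^ 2 * L with hc
  have hdn : 0 < ‖d‖ := by
    rw [hd, norm_pos_iff, sub_ne_zero]; exact hx
  have hγL : γ * L < 2 := (lt_div_iff₀ hL).mp hγ2
  have hib : (inner ℝ d b : ℝ) ≥ (1 / L) * ‖b‖ ^ 2 := hB x xstar
  have him : (inner ℝ d b : ℝ) ≥ μ * ‖d‖ ^ 2 := hBmono x xstar
  have hCSdb : (inner ℝ d b : ℝ) ≤ ‖d‖ * ‖b‖ := real_inner_le_norm d b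
  have hexp : ‖d - γ • b‖ ^ 2 = ‖d‖ ^ 2 - 2 * γ * (inner ℝ d b : ℝ) + γ ^ 2 * ‖b‖ ^ 2 := by
    rw [norm_sub_sq_real, real_inner_smul_right, norm_smul]
    simp [abs_of_pos hγ]
    ring
  have hb2 : ‖b‖ ^ 2 ≤ L * (inner ℝ d b : ℝ) := by
    rw [ge_iff_le, div_mul_eq_mul_div, one_mul, div_le_iff₀ hL] at hib
    linarith [hib]
  have hbLd : ‖b‖ ≤ L * ‖d‖ := by
    rcases eq_or_lt_of_le (norm_nonneg b) with h0 | h0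
    · rw [← h0]; positivity
    · have : ‖b‖ ^ 2 ≤ L * (‖d‖ * ‖b‖) := le_trans hb2 (by
        apply mul_le_mul_of_nonneg_left hCSdb hL.le)
      nlinarith
  have hμL : μ ≤ L := by nlinarith [mul_le_mul_of_nonneg_left hbLd (norm_nonneg d), mul_pos hdn hdn]
  have hkey : ‖d - γ • b‖ ^ 2 ≤ c * ‖d‖ ^ 2 := by
    rw [hexp, hc]
    have h1 : γ ^ 2 * ‖b‖ ^ 2 ≤ γ ^ 2 * (L * (inner ℝ d b : ℝ)) :=
      mul_le_mul_of_nonneg_left hb2 (sq_nonneg γ)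
    have h2 : (2 * γ - γ ^ 2 * L) * (μ * ‖d‖ ^ 2) ≤ (2 * γ - γ ^ 2 * L) * (inner ℝ d b : ℝ) := by
      apply mul_le_mul_of_nonneg_left him
      nlinarith
    nlinarith
  have hc0 : 0 ≤ c := by
    rw [hc]; nlinarith [sq_nonneg (γ * L - 1), sq_nonneg γ]
  have hTstep : ‖TA (x - γ • B x) - xstar‖ ≤ Real.sqrt c * ‖d‖ := by
    calc ‖TA (x - γ • B x) - xstar‖ = ‖TA (x - γ • B x) - TA (xstar - γ • B xstar)‖ := by
          rw [hfix]
      _ ≤ ‖(x - γ • B x) - (xstar - γ • B xstar)‖ := hTA _ _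
      _ = ‖d - γ • b‖ := by rw [hd, hb]; congr 1; rw [smul_sub]; abel
      _ ≤ Real.sqrt c * ‖d‖ := by
          have h := Real.sqrt_le_sqrt hkey
          rwa [Real.sqrt_sq (norm_nonneg _), Real.sqrt_mul hc0, Real.sqrt_sq (norm_nonneg _)] at h
  have hfin : (inner ℝ d (x - TA (x - γ • B x)) : ℝ)
      = ‖d‖ ^ 2 - (inner ℝ d (TA (x - γ • B x) - xstar) : ℝ) := by
    rw [← real_inner_self_eq_norm_sq, ← inner_sub_right]
    congr 1
    rw [hd]; abel
  rw [hfin]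
  have hCS : (inner ℝ d (TA (x - γ • B x) - xstar) : ℝ) ≤ ‖d‖ * ‖TA (x - γ • B x) - xstar‖ :=
    real_inner_le_norm _ _
  have : ‖d‖ * ‖TA (x - γ • B x) - xstar‖ ≤ ‖d‖ * (Real.sqrt c * ‖d‖) :=
    mul_le_mul_of_nonneg_left hTstep (norm_nonneg _)
  have heq : ‖d‖ * (Real.sqrt c * ‖d‖) = Real.sqrt c * ‖d‖ ^ 2 := by ring
  linarith
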